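/- Let R be a ring and M an R-module. If for every nonzero m ∈ M there exists an R-linear map f : M → R with f(m) ≠ 0 (M is torsionless), and R is semihereditary, then M is flat. -/

import Mathlib

open TensorProduct LinearMap Function

section Aux

variable {R : Type} [CommRing R] (S : Type)

/-- The canonical map `N ⊗ (S → R) → (S → N)`. -/
noncomputable def etaMap (N : Type) [AddCommGroup N] [Module R N] :
    N ⊗[R] (S → R) →ₗ[R] (S → N) :=
  LinearMap.pi fun s =>
    (TensorProduct.rid R N).toLinearMap ∘ₗ LinearMap.lTensor N (LinearMap.proj s)

lemma etaMap_tmul (N : Type) [AddCommGroup N] [Module R N] (x : N) (v : S → R) :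
    etaMap S N (x ⊗ₜ[R] v) = fun s => v s • x := by
  funext s
  simp [etaMap]

/-- Naturality of `etaMap` in `N`. -/
lemma etaMap_natural {N N' : Type} [AddCommGroup N] [Module R N]
    [AddCommGroup N'] [Module R N'] (u : N →ₗ[R] N') (z : N ⊗[R] (S → R)) :
    etaMap S N' (LinearMap.rTensor (S → R) u z) = u.compLeft S (etaMap S N z) := by
  induction z using TensorProduct.induction_on with
  | zero => simp
  | tmul x v =>
    simp only [rTensor_tmul, etaMap_tmul]
    funext s
    simp [LinearMap.compLeft]
    exact (u.map_smul (v s) x).symm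
  | add a b ha hb => simp [ha, hb]

/-- `etaMap` is injective when `N` is a finite free module. -/
lemma etaMap_injective_pi (n : ℕ) :
    Function.Injective (etaMap S (Fin n → R) : (Fin n → R) ⊗[R] (S → R) →ₗ[R] _) := by
  classical
  let ρ : (S → (Fin n → R)) →ₗ[R] (Fin n → R) ⊗[R] (S → R) :=
    ∑ i : Fin n, (TensorProduct.mk R (Fin n → R) (S → R) (Pi.single i 1)) ∘ₗ
      ((LinearMap.proj i : (Fin n → R) →ₗ[R] R).compLeft S)
  have hρ : ∀ z, ρ (etaMap S (Fin n → R) z) = z := by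
    intro z
    induction z using TensorProduct.induction_on with
    | zero => simp
    | tmul x v =>
      simp only [etaMap_tmul, ρ, LinearMap.sum_apply, LinearMap.comp_apply]
      have hcomp : ∀ i : Fin n,
          ((LinearMap.proj i : (Fin n → R) →ₗ[R] R).compLeft S)
            (fun s => v s • x) = x i • v := by
        intro i
        funext s
        simp [LinearMap.compLeft, mul_comm]
      calc
        ∑ i : Fin n, (TensorProduct.mk R (Fin n → R) (S → R) (Pi.single i 1))
            (((LinearMap.proj i : (Fin n → R) →ₗ[R] R).compLeft S) fun s => v s • x)
            = ∑ i : Fin n, Pi.single i 1 ⊗ₜ[R] (x i • v) := by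
              refine Finset.sum_congr rfl fun i _ => by rw [hcomp]; rfl
        _ = ∑ i : Fin n, (Pi.single i (x i) : Fin n → R) ⊗ₜ[R] v := by
              refine Finset.sum_congr rfl fun i _ => ?_
              rw [tmul_smul, smul_tmul', ← Pi.single_smul, smul_eq_mul, mul_one]
        _ = x ⊗ₜ[R] v := by rw [← sum_tmul, Finset.univ_sum_single]
    | add a b ha hb => simp [ha, hb]
  intro a b hab
  have := congrArg ρ hab
  rwa [hρ, hρ] at this

lemma compLeft_injective {N N' : Type} [AddCommGroup N] [Module R N]
    [AddCommGroup N'] [Module R N'] (u : N →ₗ[R] N') (hu : Function.Injective u) :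
    Function.Injective (u.compLeft S) := by
  intro a b hab
  funext s
  exact hu (congrFun hab s)

/-- Key step: if `N` is a finitely generated projective module with an injective linear
map `ι : N → R`, then `ι ⊗ id : N ⊗ (S → R) → R ⊗ (S → R)` is injective. -/
lemma rTensor_pi_injective {N : Type} [AddCommGroup N] [Module R N]
    [Module.Finite R N] [Module.Projective R N] (ι : N →ₗ[R] R)
    (hι : Function.Injective ι) :
    Function.Injective (LinearMap.rTensor (S → R) ι) := by
  rw [← LinearMap.ker_eq_bot, LinearMap.ker_eq_bot']
  intro z hz
  obtain ⟨n, p, u, -, -, hpu⟩ := Module.Finite.exists_comp_eq_id_of_projective R N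
  -- the image of `z` under `etaMap` dies
  have h0 : etaMap S N z = 0 := by
    apply compLeft_injective S ι hι
    rw [map_zero, ← etaMap_natural S ι z, hz, map_zero]
  have h1 : u.compLeft S (etaMap S N z) = 0 := by rw [h0, map_zero]
  have h2 : etaMap S (Fin n → R) (LinearMap.rTensor (S → R) u z) = 0 := by
    rw [etaMap_natural, h1]
  have h3 : LinearMap.rTensor (S → R) u z = 0 := by
    apply etaMap_injective_pi S n
    rw [h2, map_zero]
  have h4 : z = LinearMap.rTensor (S → R) p (LinearMap.rTensor (S → R) u z) := by
    rw [← LinearMap.comp_apply, ← LinearMap.rTensor_comp, hpu, LinearMap.rTensor_id,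
      LinearMap.id_apply]
  rw [h4, h3, map_zero]

end Aux

/-- over a semihereditary ring (every finitely generated ideal is projective),
every torsionless module (every nonzero element is separated from `0` by a linear
functional `M → R`) is flat. -/
theorem flat_of_torsionless_of_semihereditary (R M : Type) [CommRing R] [AddCommGroup M]
    [Module R M]
    (hsh : ∀ I : Ideal R, I.FG → Module.Projective R I)
    (htl : ∀ m : M, m ≠ 0 → ∃ f : M →ₗ[R] R, f m ≠ 0) :
    Module.Flat R M := by
  rw [Module.Flat.iff_rTensor_injective]
  intro I hI
  haveI : Module.Projective R I := hsh I hI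
  haveI : Module.Finite R I := Module.Finite.iff_fg.mpr hI
  haveI : Module.Flat R I := inferInstance
  set S : Type := (M →ₗ[R] R) with hS
  let e : M →ₗ[R] (S → R) := LinearMap.pi fun f => f
  have he : Function.Injective e := by
    rw [← LinearMap.ker_eq_bot, LinearMap.ker_eq_bot']
    intro m hm
    by_contra h
    obtain ⟨f, hf⟩ := htl m h
    exact hf (congrFun (congrArg (fun g => (g : S → R)) hm) f)
  rw [← LinearMap.ker_eq_bot, LinearMap.ker_eq_bot']
  intro z hz
  have hcomm : LinearMap.rTensor (S → R) I.subtype (LinearMap.lTensor I e z)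
      = LinearMap.lTensor R e (LinearMap.rTensor M I.subtype z) := by
    rw [← LinearMap.comp_apply, ← LinearMap.comp_apply,
      LinearMap.rTensor_comp_lTensor, LinearMap.lTensor_comp_rTensor]
  have h1 : LinearMap.rTensor (S → R) I.subtype (LinearMap.lTensor I e z) = 0 := by
    rw [hcomm, hz, map_zero]
  have h2 : LinearMap.lTensor (I : Submodule R R) e z = 0 :=
    rTensor_pi_injective S I.subtype I.injective_subtype h1
  have h3 := Module.Flat.lTensor_preserves_injective_linearMap (M := I) e he
  apply h3
  rw [h2, map_zero]
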